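/- Let A be a finite elementary abelian 2-group. The map sending a bilinear form A × A → ℤ/2 (viewed as a 2-cocycle) to its class in H²(A, ℤ/2) induces an isomorphism Sym²(Hom(A, ℤ/2)) ≅ H²(A, ℤ/2), where the kernel of the map from Hom(A,ℤ/2) ⊗ Hom(A,ℤ/2) to H²(A,ℤ/2) is exactly the span of elements u ⊗ v + v ⊗ u. -/

import Mathlib

open TensorProduct

namespace Stmt4

variable {A : Type*} [AddCommGroup A] [Module (ZMod 2) A]

/-- The map sending a tensor `u ⊗ v` of linear functionals to the bilinear form
(= group 2-cochain) `(a,b) ↦ u(a)·v(b)`. -/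
noncomputable def toCocycle :
    (Module.Dual (ZMod 2) A ⊗[ZMod 2] Module.Dual (ZMod 2) A) →ₗ[ZMod 2]
      (A → A → ZMod 2) :=
  TensorProduct.lift (LinearMap.mk₂ (ZMod 2)
    (fun u v => fun a b => u a * v b)
    (fun u u' v => by funext a b; simp only [LinearMap.add_apply, Pi.add_apply]; ring)
    (fun c u v => by
      funext a b; simp only [LinearMap.smul_apply, Pi.smul_apply, smul_eq_mul]; ring)
    (fun u v v' => by funext a b; simp only [LinearMap.add_apply, Pi.add_apply]; ring)
    (fun c u v => by
      funext a b; simp only [LinearMap.smul_apply, Pi.smul_apply, smul_eq_mul]; ring))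

/-- group 2-cocycles with trivial `ℤ/2`-coefficients -/
def IsCocycle2 (c : A → A → ZMod 2) : Prop :=
  ∀ a b d : A, c b d - c (a + b) d + c a (b + d) - c a b = 0

/-- group 2-coboundaries -/
def IsCoboundary2 (c : A → A → ZMod 2) : Prop :=
  ∃ g : A → ZMod 2, ∀ a b : A, c a b = g a + g b - g (a + b)

end Stmt4

section Aux
open TensorProduct Stmt4
variable {A : Type*} [AddCommGroup A] [Module (ZMod 2) A]

local notation "TT" A => Module.Dual (ZMod 2) A ⊗[ZMod 2] Module.Dual (ZMod 2) A

lemma toCocycle_tmul (u v : Module.Dual (ZMod 2) A) (a b : A) :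
    toCocycle (u ⊗ₜ[ZMod 2] v) a b = u a * v b := by simp [toCocycle]

lemma toCocycle_add_left (t : TT A) (a a' b : A) :
    toCocycle t (a + a') b = toCocycle t a b + toCocycle t a' b := by
  induction t using TensorProduct.induction_on with
  | zero => simp [map_zero]
  | tmul u v => simp [toCocycle]; ring
  | add x y hx hy => simp only [map_add, Pi.add_apply, hx, hy]; ring

lemma toCocycle_add_right (t : TT A) (a b b' : A) :
    toCocycle t a (b + b') = toCocycle t a b + toCocycle t a b' := by
  induction t using TensorProduct.induction_on with
  | zero => simp [map_zero]
  | tmul u v => simp [toCocycle]; ring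
  | add x y hx hy => simp only [map_add, Pi.add_apply, hx, hy]; ring

lemma toCocycle_zero_left (t : TT A) (b : A) : toCocycle t 0 b = 0 := by
  have := (toCocycle_add_left t 0 0 b).symm
  simpa using this

lemma toCocycle_zero_right (t : TT A) (a : A) : toCocycle t a 0 = 0 := by
  have := (toCocycle_add_right t a 0 0).symm
  simpa using this

lemma part1 (t : TT A) : IsCocycle2 (toCocycle t) := by
  intro a b d
  rw [toCocycle_add_left, toCocycle_add_right]
  ring

lemma cocycle_iff {c : A → A → ZMod 2} (hc : IsCocycle2 c) (a b d : A) :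
    c b d + c a (b + d) = c (a + b) d + c a b := by
  have h := hc a b d
  have e : ∀ x y z w : ZMod 2, x - y + z - w = 0 → x + z = y + w := by decide
  exact e _ _ _ _ h

lemma cocycle_left_zero {c : A → A → ZMod 2} (hc : IsCocycle2 c) (b : A) :
    c 0 b = c 0 0 := by
  have h := cocycle_iff hc 0 0 b
  simp only [zero_add] at h
  have e : ∀ x y : ZMod 2, x + x = x + y → x = y := by decide
  exact e _ _ h

lemma cocycle_right_zero {c : A → A → ZMod 2} (hc : IsCocycle2 c) (a : A) :
    c a 0 = c 0 0 := by
  have h := cocycle_iff hc a 0 0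
  simp only [add_zero, zero_add] at h
  have e : ∀ x y z : ZMod 2, x + y = z + z → y = x := by decide
  exact (e _ _ _ h)

/-- additivity of the pairing `β(a,b) = c a b + c b a` for a cocycle. -/
lemma beta_add_left {c : A → A → ZMod 2} (hc : IsCocycle2 c) (a b d : A) :
    c (a + b) d + c d (a + b) = (c a d + c d a) + (c b d + c d b) := by
  have h1 := cocycle_iff hc a b d
  have h2 := cocycle_iff hc d a b
  have h3 := cocycle_iff hc a d b
  rw [add_comm d b, add_comm a d] at h3
  have e : ∀ x1 x2 x3 x4 x5 x6 x7 x8 x9 : ZMod 2,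
      x1 + x2 = x3 + x4 → x4 + x5 = x6 + x7 → x8 + x2 = x6 + x9 →
      x3 + x5 = (x9 + x7) + (x1 + x8) := by decide
  exact e _ _ _ _ _ _ _ _ _ h1 h2 h3

/-- the diagonal is quadratic: for a normalized cocycle,
`c (a+b) (a+b) = c a a + c b b + (c a b + c b a)`. -/
lemma quad_add {c : A → A → ZMod 2} (hc : IsCocycle2 c) (h0 : c 0 0 = 0) (a b : A) :
    c (a + b) (a + b) = c a a + c b b + (c a b + c b a) := by
  have k1 := cocycle_iff hc a b (a + b)
  have hb : b + (a + b) = a := by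
    rw [add_comm a b, ← add_assoc, ZModModule.add_self, zero_add]
  rw [hb] at k1
  have k2 := cocycle_iff hc b a b
  rw [add_comm b a] at k2
  have k3 := cocycle_iff hc a b b
  rw [ZModModule.add_self, cocycle_right_zero hc, h0] at k3
  have e : ∀ y1 y2 y3 y4 y5 y6 y7 : ZMod 2,
      y1 + y2 = y3 + y4 → y4 + y1 = y5 + y6 → y7 + 0 = y5 + y4 →
      y3 = y2 + y7 + (y4 + y6) := by decide
  exact e _ _ _ _ _ _ _ k1 k2 k3

end Aux
section Aux2
open TensorProduct Stmt4
variable {A : Type*} [AddCommGroup A] [Module (ZMod 2) A]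

/-- type synonym for the central extension determined by a cocycle -/
def ExtT (A : Type*) : Type _ := A × ZMod 2

/-- A normalized symmetric alternating cocycle on an `𝔽₂`-vector space is a coboundary. -/
lemma isCoboundary_of_symm (c : A → A → ZMod 2) (hc : IsCocycle2 c)
    (hsym : ∀ a b, c a b = c b a) (hdiag : ∀ a, c a a = 0) (h00 : c 0 0 = 0) :
    IsCoboundary2 c := by
  have h0l : ∀ b, c 0 b = 0 := fun b => (cocycle_left_zero hc b).trans h00
  have h0r : ∀ a, c a 0 = 0 := fun a => (cocycle_right_zero hc a).trans h00
  letI : Add (ExtT A) := ⟨fun x y => (x.1 + y.1, x.2 + y.2 + c x.1 y.1)⟩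
  letI : Zero (ExtT A) := ⟨((0 : A), (0 : ZMod 2))⟩
  letI : Neg (ExtT A) := ⟨fun x => x⟩
  letI : AddCommGroup (ExtT A) :=
    { add := (· + ·)
      zero := (0 : ExtT A)
      neg := Neg.neg
      nsmul := nsmulRec
      zsmul := zsmulRec
      add_assoc := by
        rintro ⟨x1, x2⟩ ⟨y1, y2⟩ ⟨z1, z2⟩
        have hco := cocycle_iff hc x1 y1 z1
        refine Prod.ext (add_assoc _ _ _) ?_
        show (x2 + y2 + c x1 y1) + z2 + c (x1 + y1) z1
            = x2 + (y2 + z2 + c y1 z1) + c x1 (y1 + z1)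
        have e : ∀ s t u p q r w : ZMod 2, r + w = q + p →
            (s + t + p) + u + q = s + (t + u + r) + w := by decide
        exact e _ _ _ _ _ _ _ hco
      zero_add := by
        rintro ⟨x1, x2⟩
        refine Prod.ext (zero_add _) ?_
        show 0 + x2 + c 0 x1 = x2
        rw [h0l, zero_add, add_zero]
      add_zero := by
        rintro ⟨x1, x2⟩
        refine Prod.ext (add_zero _) ?_
        show x2 + 0 + c x1 0 = x2
        rw [h0r, add_zero, add_zero]
      neg_add_cancel := by
        rintro ⟨x1, x2⟩
        refine Prod.ext ?_ ?_
        · show x1 + x1 = 0; exact ZModModule.add_self x1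
        · show x2 + x2 + c x1 x1 = 0
          rw [hdiag, ZModModule.add_self, add_zero]
      add_comm := by
        rintro ⟨x1, x2⟩ ⟨y1, y2⟩
        refine Prod.ext (add_comm _ _) ?_
        show x2 + y2 + c x1 y1 = y2 + x2 + c y1 x1
        rw [hsym x1 y1, add_comm x2 y2] }
  letI : Module (ZMod 2) (ExtT A) := AddCommGroup.zmodModule (n := 2) (by
    rintro ⟨x1, x2⟩
    refine (two_nsmul (M := ExtT A) _).trans ?_
    refine Prod.ext ?_ ?_
    · show x1 + x1 = 0; exact ZModModule.add_self x1
    · show x2 + x2 + c x1 x1 = 0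
      rw [hdiag, ZModModule.add_self, add_zero])
  let π : ExtT A →+ A :=
    { toFun := fun x => x.1
      map_zero' := rfl
      map_add' := fun x y => rfl }
  let πₗ : ExtT A →ₗ[ZMod 2] A := π.toZModLinearMap 2
  have hsurj : LinearMap.range πₗ = ⊤ := by
    rw [LinearMap.range_eq_top]
    exact fun a => ⟨((a, 0) : ExtT A), rfl⟩
  obtain ⟨σ, hσ⟩ := πₗ.exists_rightInverse_of_surjective hsurj
  have hfst : ∀ a : A, (σ a).1 = a := fun a => LinearMap.congr_fun hσ a
  refine ⟨fun a => (σ a).2, fun a b => ?_⟩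
  have hadd : σ (a + b) = σ a + σ b := map_add σ a b
  have h2 : (σ (a + b)).2 = (σ a).2 + (σ b).2 + c (σ a).1 (σ b).1 :=
    congrArg Prod.snd hadd
  rw [hfst, hfst] at h2
  have e : ∀ x y z w : ZMod 2, w = x + y + z → z = x + y - w := by decide
  exact e _ _ _ _ h2
end Aux2
section Aux3
open TensorProduct Stmt4
variable {A : Type*} [AddCommGroup A] [Module (ZMod 2) A]

/-- biadditive functions into `ZMod 2` are bilinear -/
noncomputable def mkBilin (f : A → A → ZMod 2)
    (h1 : ∀ a a' b, f (a + a') b = f a b + f a' b)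
    (h2 : ∀ a b b', f a (b + b') = f a b + f a b') :
    A →ₗ[ZMod 2] A →ₗ[ZMod 2] ZMod 2 := by
  have hz1 : ∀ b, f 0 b = 0 := by
    intro b
    have h := h1 0 0 b
    rw [zero_add] at h
    have e : ∀ x : ZMod 2, x = x + x → x = 0 := by decide
    exact e _ h
  have hz2 : ∀ a, f a 0 = 0 := by
    intro a
    have h := h2 a 0 0
    rw [zero_add] at h
    have e : ∀ x : ZMod 2, x = x + x → x = 0 := by decide
    exact e _ h
  have hr : ∀ r : ZMod 2, r = 0 ∨ r = 1 := by decide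
  exact LinearMap.mk₂ (ZMod 2) f h1
    (fun r a b => by
      rcases hr r with h | h <;> subst h
      · rw [zero_smul, zero_smul, hz1]
      · rw [one_smul, one_smul])
    h2
    (fun r a b => by
      rcases hr r with h | h <;> subst h
      · rw [zero_smul, zero_smul, hz2]
      · rw [one_smul, one_smul])

lemma mkBilin_apply (f : A → A → ZMod 2) (h1) (h2) (a b : A) :
    mkBilin f h1 h2 a b = f a b := rfl

/-- a biadditive function vanishing on pairs of basis vectors vanishes -/
lemma biadd_eq_zero {ι : Type*} [Finite ι] (b : Module.Basis ι (ZMod 2) A)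
    (f : A → A → ZMod 2)
    (h1 : ∀ a a' x, f (a + a') x = f a x + f a' x)
    (h2 : ∀ a x x', f a (x + x') = f a x + f a x')
    (hb : ∀ i j, f (b i) (b j) = 0) (a x : A) : f a x = 0 := by
  have : mkBilin f h1 h2 = 0 := by
    apply b.ext; intro i
    apply b.ext; intro j
    simpa [mkBilin_apply] using hb i j
  have := LinearMap.congr_fun (LinearMap.congr_fun this a) x
  simpa [mkBilin_apply] using this

/-- an additive function vanishing on basis vectors vanishes -/
lemma addf_eq_zero {ι : Type*} [Finite ι] (b : Module.Basis ι (ZMod 2) A)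
    (q : A → ZMod 2) (hq : ∀ a x, q (a + x) = q a + q x)
    (hb : ∀ i, q (b i) = 0) (a : A) : q a = 0 := by
  let F : A →+ ZMod 2 := AddMonoidHom.mk' q hq
  have : F.toZModLinearMap 2 = 0 := by
    apply b.ext; intro i
    simpa [F] using hb i
  simpa [F] using LinearMap.congr_fun this a

/-- the coefficient of a tensor in the dual tensor basis is obtained by evaluating
the associated bilinear form on basis vectors -/
lemma toCocycle_basis_repr [Finite A] {n : ℕ} (b : Module.Basis (Fin n) (ZMod 2) A)
    (t : Module.Dual (ZMod 2) A ⊗[ZMod 2] Module.Dual (ZMod 2) A) (i j : Fin n) :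
    toCocycle t (b i) (b j)
      = ((b.dualBasis.tensorProduct b.dualBasis).repr t) (i, j) := by
  set T := b.dualBasis.tensorProduct b.dualBasis with hT
  let φ : (Module.Dual (ZMod 2) A ⊗[ZMod 2] Module.Dual (ZMod 2) A) →ₗ[ZMod 2] ZMod 2 :=
    (LinearMap.proj (b j)) ∘ₗ (LinearMap.proj (b i)) ∘ₗ toCocycle
  let ψ : (Module.Dual (ZMod 2) A ⊗[ZMod 2] Module.Dual (ZMod 2) A) →ₗ[ZMod 2] ZMod 2 :=
    T.coord (i, j)
  have hφψ : φ = ψ := by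
    apply T.ext
    rintro ⟨k, l⟩
    have hTkl : T (k, l) = b.dualBasis k ⊗ₜ[ZMod 2] b.dualBasis l :=
      Module.Basis.tensorProduct_apply _ _ _ _
    show φ (T (k, l)) = ψ (T (k, l))
    have hφ : φ (T (k, l)) = b.dualBasis k (b i) * b.dualBasis l (b j) := by
      rw [hTkl]; exact toCocycle_tmul _ _ _ _
    have hψ : ψ (T (k, l)) = if (k, l) = (i, j) then 1 else 0 := by
      show T.repr (T (k, l)) (i, j) = _
      rw [T.repr_self]
      exact Finsupp.single_apply
    rw [hφ, hψ, Module.Basis.dualBasis_apply_self, Module.Basis.dualBasis_apply_self]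
    by_cases h1 : k = i
    · subst h1
      by_cases h2 : l = j
      · subst h2; simp
      · simp [Prod.ext_iff, h2, Ne.symm h2]
    · simp [Prod.ext_iff, h1, Ne.symm h1]
  exact LinearMap.congr_fun hφψ t
end Aux3
section Aux4
open TensorProduct Stmt4 Finset
variable {A : Type*} [AddCommGroup A] [Module (ZMod 2) A]

lemma part2_easy (t : Module.Dual (ZMod 2) A ⊗[ZMod 2] Module.Dual (ZMod 2) A)
    (ht : t ∈ Submodule.span (ZMod 2)
        {x : Module.Dual (ZMod 2) A ⊗[ZMod 2] Module.Dual (ZMod 2) A |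
          ∃ u v : Module.Dual (ZMod 2) A, x = u ⊗ₜ[ZMod 2] v + v ⊗ₜ[ZMod 2] u}) :
    IsCoboundary2 (toCocycle t) := by
  let P : Submodule (ZMod 2) (Module.Dual (ZMod 2) A ⊗[ZMod 2] Module.Dual (ZMod 2) A) :=
    { carrier := {x | IsCoboundary2 (toCocycle x)}
      zero_mem' := by
        refine ⟨fun _ => 0, fun a b => ?_⟩
        simp [map_zero]
      add_mem' := by
        rintro x y ⟨g1, hg1⟩ ⟨g2, hg2⟩
        refine ⟨fun a => g1 a + g2 a, fun a b => ?_⟩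
        rw [map_add]
        show toCocycle x a b + toCocycle y a b = _
        rw [hg1 a b, hg2 a b]; ring
      smul_mem' := by
        intro r x hx
        have hr' : ∀ r : ZMod 2, r = 0 ∨ r = 1 := by decide
        have hr := hr' r
        rcases hr with h | h <;> subst h
        · refine ⟨fun _ => 0, fun a b => ?_⟩
          simp [map_zero, zero_smul]
        · simpa [one_smul] using hx }
  suffices h : Submodule.span (ZMod 2)
      {x : Module.Dual (ZMod 2) A ⊗[ZMod 2] Module.Dual (ZMod 2) A |
        ∃ u v : Module.Dual (ZMod 2) A, x = u ⊗ₜ[ZMod 2] v + v ⊗ₜ[ZMod 2] u} ≤ P from h ht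
  refine Submodule.span_le.mpr ?_
  rintro x ⟨u, v, rfl⟩
  refine ⟨fun a => u a * v a, fun a b => ?_⟩
  rw [map_add]
  show toCocycle (u ⊗ₜ[ZMod 2] v) a b + toCocycle (v ⊗ₜ[ZMod 2] u) a b = _
  rw [toCocycle_tmul, toCocycle_tmul]
  show u a * v b + v a * u b = u a * v a + u b * v b - u (a + b) * v (a + b)
  rw [map_add, map_add]
  have e : ∀ x y z w : ZMod 2, x * w + y * z = x * y + z * w - (x + z) * (y + w) := by decide
  exact e (u a) (v a) (u b) (v b)

lemma part2_hard [Finite A]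
    (t : Module.Dual (ZMod 2) A ⊗[ZMod 2] Module.Dual (ZMod 2) A)
    (ht : IsCoboundary2 (toCocycle t)) :
    t ∈ Submodule.span (ZMod 2)
        {x : Module.Dual (ZMod 2) A ⊗[ZMod 2] Module.Dual (ZMod 2) A |
          ∃ u v : Module.Dual (ZMod 2) A, x = u ⊗ₜ[ZMod 2] v + v ⊗ₜ[ZMod 2] u} := by
  have : FiniteDimensional (ZMod 2) A := Module.Finite.of_finite
  obtain ⟨g, hg⟩ := ht
  set n := Module.finrank (ZMod 2) A
  let b : Module.Basis (Fin n) (ZMod 2) A := Module.finBasis (ZMod 2) A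
  set T := b.dualBasis.tensorProduct b.dualBasis with hTdef
  -- symmetry of B = toCocycle t
  have hsymB : ∀ a x : A, toCocycle t a x = toCocycle t x a := by
    intro a x
    rw [hg a x, hg x a, add_comm (g a) (g x), add_comm a x]
  have hg0 : g 0 = 0 := by
    have h := hg 0 0
    rw [toCocycle_zero_left, add_zero] at h
    have e : ∀ x : ZMod 2, 0 = x + x - x → x = 0 := by decide
    exact e _ h
  have hdiagB : ∀ a : A, toCocycle t a a = 0 := by
    intro a
    rw [hg a a, ZModModule.add_self a, hg0]
    have e : ∀ x : ZMod 2, x + x - 0 = 0 := by decide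
    exact e (g a)
  -- coefficient facts
  have hrs : ∀ p : Fin n × Fin n, T.repr t p.swap = T.repr t p := by
    rintro ⟨i, j⟩
    show T.repr t (j, i) = T.repr t (i, j)
    rw [hTdef, ← toCocycle_basis_repr b t j i, ← toCocycle_basis_repr b t i j]
    exact hsymB _ _
  have hrd : ∀ p : Fin n × Fin n, p.1 = p.2 → T.repr t p = 0 := by
    rintro ⟨i, j⟩ h
    dsimp at h; subst h
    rw [hTdef, ← toCocycle_basis_repr b t i i]
    exact hdiagB _
  -- the span
  set S := {x : Module.Dual (ZMod 2) A ⊗[ZMod 2] Module.Dual (ZMod 2) A |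
          ∃ u v : Module.Dual (ZMod 2) A, x = u ⊗ₜ[ZMod 2] v + v ⊗ₜ[ZMod 2] u}
  have hgen : ∀ p : Fin n × Fin n, T p + T p.swap ∈ Submodule.span (ZMod 2) S := by
    rintro ⟨i, j⟩
    apply Submodule.subset_span
    show T (i, j) + T (j, i) ∈ _
    rw [hTdef]
    exact ⟨b.dualBasis i, b.dualBasis j, by
      rw [Module.Basis.tensorProduct_apply, Module.Basis.tensorProduct_apply]⟩
  -- decompose t
  have hrepr : ∑ p : Fin n × Fin n, T.repr t p • T p = t := T.sum_repr t
  have hsplit : ∑ p : Fin n × Fin n, T.repr t p • T p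
      = ∑ p ∈ univ.filter (fun p : Fin n × Fin n => p.1 < p.2),
          T.repr t p • (T p + T p.swap) := by
    simp_rw [smul_add]
    rw [Finset.sum_add_distrib]
    have h1 : ∑ p ∈ univ.filter (fun p : Fin n × Fin n => p.1 < p.2), T.repr t p • T p.swap
        = ∑ p ∈ univ.filter (fun p : Fin n × Fin n => p.2 < p.1), T.repr t p • T p := by
      refine Finset.sum_nbij' Prod.swap Prod.swap ?_ ?_ ?_ ?_ ?_
      · rintro ⟨i, j⟩ h; simpa using by simpa using h
      · rintro ⟨i, j⟩ h; simpa using by simpa using h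
      · rintro ⟨i, j⟩ _; rfl
      · rintro ⟨i, j⟩ _; rfl
      · rintro p _; rw [hrs p]
    rw [h1]
    have h2 : ∑ p ∈ univ.filter (fun p : Fin n × Fin n => p.1 < p.2), T.repr t p • T p
        + ∑ p ∈ univ.filter (fun p : Fin n × Fin n => p.2 < p.1), T.repr t p • T p
        = ∑ p : Fin n × Fin n, T.repr t p • T p := by
      have hd : ∑ p ∈ univ.filter (fun p : Fin n × Fin n => ¬ p.1 < p.2), T.repr t p • T p
          = ∑ p ∈ univ.filter (fun p : Fin n × Fin n => p.2 < p.1), T.repr t p • T p := by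
        rw [← Finset.sum_filter_add_sum_filter_not
          (univ.filter (fun p : Fin n × Fin n => ¬ p.1 < p.2))
          (fun p : Fin n × Fin n => p.2 < p.1)]
        have e1 : (univ.filter (fun p : Fin n × Fin n => ¬ p.1 < p.2)).filter
            (fun p : Fin n × Fin n => p.2 < p.1)
            = univ.filter (fun p : Fin n × Fin n => p.2 < p.1) := by
          ext p; simp only [Finset.mem_filter, Finset.mem_univ, true_and]
          exact ⟨fun h => h.2, fun h => ⟨not_lt.mpr h.le, h⟩⟩
        have e2 : ∑ p ∈ (univ.filter (fun p : Fin n × Fin n => ¬ p.1 < p.2)).filter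
            (fun p : Fin n × Fin n => ¬ p.2 < p.1), T.repr t p • T p = 0 := by
          apply Finset.sum_eq_zero
          rintro p hp
          simp only [Finset.mem_filter, Finset.mem_univ, true_and] at hp
          have : p.1 = p.2 := le_antisymm (not_lt.mp hp.2) (not_lt.mp hp.1)
          rw [hrd p this, zero_smul]
        rw [e1, e2, add_zero]
      rw [← hd]
      exact Finset.sum_filter_add_sum_filter_not _ _ _
    exact h2.symm
  rw [← hrepr, hsplit]
  exact Submodule.sum_mem _ fun p _ => Submodule.smul_mem _ _ (hgen p)
end Aux4
section Aux5
open TensorProduct Stmt4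
variable {A : Type*} [AddCommGroup A] [Module (ZMod 2) A]

lemma sub_cocycle {c1 c2 : A → A → ZMod 2} (k : ZMod 2)
    (h1 : IsCocycle2 c1) (h2 : IsCocycle2 c2) :
    IsCocycle2 (fun a b => c1 a b - c2 a b - k) := by
  intro a b d
  have e1 := h1 a b d
  have e2 := h2 a b d
  show (c1 b d - c2 b d - k) - (c1 (a + b) d - c2 (a + b) d - k)
      + (c1 a (b + d) - c2 a (b + d) - k) - (c1 a b - c2 a b - k) = 0
  linear_combination e1 - e2

lemma part3 [Finite A] (c : A → A → ZMod 2) (hc : IsCocycle2 c) :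
    ∃ t : Module.Dual (ZMod 2) A ⊗[ZMod 2] Module.Dual (ZMod 2) A,
      IsCoboundary2 (fun a b => c a b - toCocycle t a b) := by
  have : FiniteDimensional (ZMod 2) A := Module.Finite.of_finite
  set n := Module.finrank (ZMod 2) A with hn
  let b : Module.Basis (Fin n) (ZMod 2) A := Module.finBasis (ZMod 2) A
  set k := c 0 0 with hk
  set M : Fin n → Fin n → ZMod 2 := fun i j =>
    if i < j then c (b i) (b j) + c (b j) (b i)
    else if i = j then c (b i) (b i) - k else 0 with hM
  set T := b.dualBasis.tensorProduct b.dualBasis with hT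
  set t := T.repr.symm (Finsupp.equivFunOnFinite.symm fun p : Fin n × Fin n => M p.1 p.2)
    with htdef
  have hB : ∀ i j, toCocycle t (b i) (b j) = M i j := by
    intro i j
    rw [toCocycle_basis_repr b t i j, ← hT, htdef, LinearEquiv.apply_symm_apply]
    simp
  set c₃ : A → A → ZMod 2 := fun a x => c a x - toCocycle t a x - k with hc₃def
  have hc₃ : IsCocycle2 c₃ := sub_cocycle k hc (part1 t)
  have h₃00 : c₃ 0 0 = 0 := by
    show c 0 0 - toCocycle t 0 0 - k = 0
    rw [toCocycle_zero_left, ← hk]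
    ring
  -- the pairing of c₃ vanishes
  have hf : ∀ a x : A, c₃ a x + c₃ x a
      = ((c a x + c x a) + (toCocycle t a x + toCocycle t x a)) - (k + k) := by
    intro a x
    have e : ∀ p q u v kk : ZMod 2,
        (p - u - kk) + (q - v - kk) = (p + q) + (u + v) - (kk + kk) := by decide
    exact e _ _ _ _ _
  have hf1 : ∀ a a' x : A, c₃ (a + a') x + c₃ x (a + a')
      = (c₃ a x + c₃ x a) + (c₃ a' x + c₃ x a') := by
    intro a a' x
    rw [hf, hf, hf, beta_add_left hc, toCocycle_add_left, toCocycle_add_right]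
    linear_combination (ZModModule.add_self k)
  have hfb : ∀ i j, c₃ (b i) (b j) + c₃ (b j) (b i) = 0 := by
    intro i j
    have e1 : ∀ x y kk : ZMod 2, (x - (x + y) - kk) + (y - 0 - kk) = 0 := by decide
    have e2 : ∀ x kk : ZMod 2, (x - (x - kk) - kk) + (x - (x - kk) - kk) = 0 := by decide
    have e3 : ∀ x y kk : ZMod 2, (x - 0 - kk) + (y - (y + x) - kk) = 0 := by decide
    show (c (b i) (b j) - toCocycle t (b i) (b j) - k)
        + (c (b j) (b i) - toCocycle t (b j) (b i) - k) = 0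
    rw [hB, hB]
    rcases lt_trichotomy i j with h | h | h
    · have h1 : ¬ j < i := asymm h
      have h2 : j ≠ i := (ne_of_lt h).symm
      have hMij : M i j = c (b i) (b j) + c (b j) (b i) := by rw [hM]; simp [h]
      have hMji : M j i = 0 := by rw [hM]; simp [h1, h2]
      rw [hMij, hMji]
      exact e1 _ _ _
    · subst h
      have hMii : M i i = c (b i) (b i) - k := by rw [hM]; simp
      rw [hMii]
      exact e2 _ _
    · have h1 : ¬ i < j := asymm h
      have h2 : i ≠ j := (ne_of_lt h).symm
      have hMij : M i j = 0 := by rw [hM]; simp [h1, h2]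
      have hMji : M j i = c (b j) (b i) + c (b i) (b j) := by rw [hM]; simp [h]
      rw [hMij, hMji]
      exact e3 _ _ _
  have hfzero : ∀ a x : A, c₃ a x + c₃ x a = 0 := by
    intro a x
    have hsy : ∀ a x : A, c₃ a x + c₃ x a = c₃ x a + c₃ a x := fun a x => add_comm _ _
    refine biadd_eq_zero b (fun a x => c₃ a x + c₃ x a) hf1 ?_ hfb a x
    intro a x x'
    show c₃ a (x + x') + c₃ (x + x') a = (c₃ a x + c₃ x a) + (c₃ a x' + c₃ x' a)
    rw [hsy a (x + x'), hf1 x x' a, hsy x a, hsy x' a]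
  have hsym₃ : ∀ a x : A, c₃ a x = c₃ x a := by
    intro a x
    have e : ∀ u v : ZMod 2, u + v = 0 → u = v := by decide
    exact e _ _ (hfzero a x)
  have hq : ∀ a, c₃ a a = 0 := by
    refine addf_eq_zero b (fun a => c₃ a a) ?_ ?_
    · intro a x
      have hqa := quad_add hc₃ h₃00 a x
      rw [hfzero a x, add_zero] at hqa
      exact hqa
    · intro i
      show c (b i) (b i) - toCocycle t (b i) (b i) - k = 0
      rw [hB]
      have hMii : M i i = c (b i) (b i) - k := by rw [hM]; simp
      rw [hMii]; ring
  obtain ⟨g, hg⟩ := isCoboundary_of_symm c₃ hc₃ hsym₃ hq h₃00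
  refine ⟨t, fun a => g a + k, fun a x => ?_⟩
  have h := hg a x
  show c a x - toCocycle t a x = (g a + k) + (g x + k) - (g (a + x) + k)
  have h' : c a x - toCocycle t a x - k = g a + g x - g (a + x) := h
  linear_combination h'
end Aux5
open Stmt4 in
/-- For a finite elementary abelian 2-group `A`, the map sending a bilinear form
(as a 2-cocycle) to its class in `H²(A, ℤ/2)` induces an isomorphism
`Sym²(Hom(A,ℤ/2)) ≅ H²(A,ℤ/2)`: every bilinear form is a cocycle, the kernel of
`Hom(A,ℤ/2) ⊗ Hom(A,ℤ/2) → H²(A,ℤ/2)` is exactly the span of the `u ⊗ v + v ⊗ u`,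
and every cocycle is cohomologous to the image of some tensor. -/
theorem stmt_4 (A : Type*) [AddCommGroup A] [Module (ZMod 2) A] [Finite A] :
    (∀ t : Module.Dual (ZMod 2) A ⊗[ZMod 2] Module.Dual (ZMod 2) A,
      IsCocycle2 (toCocycle t)) ∧
    (∀ t : Module.Dual (ZMod 2) A ⊗[ZMod 2] Module.Dual (ZMod 2) A,
      IsCoboundary2 (toCocycle t) ↔
        t ∈ Submodule.span (ZMod 2)
          {x : Module.Dual (ZMod 2) A ⊗[ZMod 2] Module.Dual (ZMod 2) A |
            ∃ u v : Module.Dual (ZMod 2) A, x = u ⊗ₜ[ZMod 2] v + v ⊗ₜ[ZMod 2] u}) ∧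
    (∀ c : A → A → ZMod 2, IsCocycle2 c →
      ∃ t : Module.Dual (ZMod 2) A ⊗[ZMod 2] Module.Dual (ZMod 2) A,
        IsCoboundary2 (fun a b => c a b - toCocycle t a b)) := by
  exact ⟨fun t => part1 t, fun t => ⟨part2_hard t, part2_easy t⟩, fun c hc => part3 c hc⟩
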